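/- Let q₁ ≥ 1. Then there exists a constant C, depending only on q₁, such that for all 0 < t₁ < t₂ one has ∫₀^{t₁} ( ∫_ℝ |G_{t₂−s}(x) − G_{t₁−s}(x)|^{2q₁} dx )^{1/q₁} ds ≤ C (t₂ − t₁)^{1/(2q₁)}. -/

import Mathlib

open MeasureTheory Real Filter

/-- The heat kernel on `ℝ`: `G t x = (4πt)^(-1/2) exp(-x²/(4t))`. -/
noncomputable def G (t x : ℝ) : ℝ :=
  (4 * Real.pi * t) ^ (-(1:ℝ)/2) * Real.exp (-x ^ 2 / (4 * t))

open intervalIntegral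

lemma G_nonneg {t : ℝ} (ht : 0 < t) (x : ℝ) : 0 ≤ G t x := by
  unfold G
  have : (0:ℝ) < 4 * π * t := by positivity
  positivity

lemma hasDerivAt_G (x : ℝ) {t : ℝ} (ht : 0 < t) :
    HasDerivAt (fun τ => G τ x) (G t x * (x ^ 2 / (4 * t ^ 2) - 1 / (2 * t))) t := by
  have h4πt : (0:ℝ) < 4 * π * t := by positivity
  have h1 : HasDerivAt (fun τ : ℝ => 4 * π * τ) (4 * π) t := by
    simpa using (hasDerivAt_id t).const_mul (4 * π)
  have h2 : HasDerivAt (fun τ : ℝ => (4 * π * τ) ^ (-(1:ℝ)/2))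
      ((-(1:ℝ)/2) * (4 * π * t) ^ ((-(1:ℝ)/2) - 1) * (4 * π)) t := by
    exact (Real.hasDerivAt_rpow_const (Or.inl h4πt.ne')).comp t h1
  have h3 : HasDerivAt (fun τ : ℝ => -x ^ 2 / (4 * τ)) (x ^ 2 / (4 * t ^ 2)) t := by
    have hinv : HasDerivAt (fun τ : ℝ => τ⁻¹) (-(t ^ 2)⁻¹) t := hasDerivAt_inv ht.ne'
    have h := hinv.const_mul (-x ^ 2 / 4)
    have heq : (fun τ : ℝ => -x ^ 2 / (4 * τ)) = (fun τ : ℝ => -x ^ 2 / 4 * τ⁻¹) := by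
      funext τ; ring
    rw [heq]
    refine h.congr_deriv ?_
    ring
  have h4 : HasDerivAt (fun τ : ℝ => Real.exp (-x ^ 2 / (4 * τ)))
      (Real.exp (-x ^ 2 / (4 * t)) * (x ^ 2 / (4 * t ^ 2))) t := h3.exp
  have := h2.mul h4
  refine this.congr_deriv ?_
  unfold G
  rw [show (-(1:ℝ)/2 - 1) = (-(1:ℝ)/2) + (-1) by ring, Real.rpow_add h4πt,
    Real.rpow_neg_one]
  field_simp
  ring

/-- Majorant for the time-derivative of `G` on `[b,a]`. -/
noncomputable def M (a b x : ℝ) : ℝ :=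
  (4 * Real.pi * b) ^ (-(1:ℝ)/2) * (x ^ 2 / (4 * b ^ 2) + 1 / (2 * b)) *
    Real.exp (-x ^ 2 / (4 * a))

lemma M_nonneg {a b : ℝ} (hb : 0 < b) (x : ℝ) : 0 ≤ M a b x := by
  unfold M
  have : (0:ℝ) < 4 * π * b := by positivity
  positivity

lemma G_le {a b : ℝ} (hb : 0 < b) (hbτ : b ≤ τ) (hτa : τ ≤ a) (x : ℝ) :
    G τ x ≤ (4 * π * b) ^ (-(1:ℝ)/2) * Real.exp (-x ^ 2 / (4 * a)) := by
  have hτ : 0 < τ := hb.trans_le hbτ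
  have h1 : (4 * π * τ) ^ (-(1:ℝ)/2) ≤ (4 * π * b) ^ (-(1:ℝ)/2) := by
    apply Real.rpow_le_rpow_of_nonpos (by positivity) (by nlinarith [pi_pos]) (by norm_num)
  have ha : 0 < a := hτ.trans_le hτa
  have h2 : Real.exp (-x ^ 2 / (4 * τ)) ≤ Real.exp (-x ^ 2 / (4 * a)) := by
    apply Real.exp_le_exp.mpr
    rw [neg_div, neg_div, neg_le_neg_iff]
    exact div_le_div_of_nonneg_left (sq_nonneg x) (by positivity) (by linarith)
  unfold G
  have hpos : (0:ℝ) < 4 * π * τ := by positivity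
  exact mul_le_mul h1 h2 (Real.exp_nonneg _) (by positivity)

lemma deriv_bound {a b τ x : ℝ} (hb : 0 < b) (hbτ : b ≤ τ) (hτa : τ ≤ a) :
    |G τ x * (x ^ 2 / (4 * τ ^ 2) - 1 / (2 * τ))| ≤ M a b x := by
  have hτ : 0 < τ := hb.trans_le hbτ
  rw [abs_mul, abs_of_nonneg (G_nonneg hτ x)]
  have h1 : |x ^ 2 / (4 * τ ^ 2) - 1 / (2 * τ)| ≤ x ^ 2 / (4 * b ^ 2) + 1 / (2 * b) := by
    have e1 : x ^ 2 / (4 * τ ^ 2) ≤ x ^ 2 / (4 * b ^ 2) := by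
      apply div_le_div_of_nonneg_left (sq_nonneg x) (by positivity)
      nlinarith
    have e2 : 1 / (2 * τ) ≤ 1 / (2 * b) := by
      apply div_le_div_of_nonneg_left (by norm_num) (by positivity)
      linarith
    have e3 : 0 ≤ x ^ 2 / (4 * τ ^ 2) := by positivity
    have e4 : 0 ≤ 1 / (2 * τ) := by positivity
    rw [abs_sub_le_iff]
    constructor <;> linarith
  calc G τ x * |x ^ 2 / (4 * τ ^ 2) - 1 / (2 * τ)|
      ≤ ((4 * π * b) ^ (-(1:ℝ)/2) * Real.exp (-x ^ 2 / (4 * a))) *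
        (x ^ 2 / (4 * b ^ 2) + 1 / (2 * b)) := by
        apply mul_le_mul (G_le hb hbτ hτa x) h1 (abs_nonneg _)
        have : (0:ℝ) < 4 * π * b := by positivity
        positivity
    _ = M a b x := by unfold M; ring

lemma G_sub_le {a b : ℝ} (hb : 0 < b) (hba : b ≤ a) (x : ℝ) :
    |G a x - G b x| ≤ (a - b) * M a b x := by
  have key : ‖G a x - G b x‖ ≤ M a b x * ‖a - b‖ := by
    apply Convex.norm_image_sub_le_of_norm_hasDerivWithin_le
      (f' := fun τ => G τ x * (x ^ 2 / (4 * τ ^ 2) - 1 / (2 * τ)))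
      (s := Set.Icc b a)
      (fun τ hτ => (hasDerivAt_G x (hb.trans_le hτ.1)).hasDerivWithinAt)
      (fun τ hτ => by
        rw [Real.norm_eq_abs]; exact deriv_bound hb hτ.1 hτ.2)
      (convex_Icc b a) (Set.left_mem_Icc.mpr hba) (Set.right_mem_Icc.mpr hba)
  have habs : |a - b| = a - b := abs_of_nonneg (by linarith)
  rw [Real.norm_eq_abs, Real.norm_eq_abs, habs] at key
  exact key.trans (le_of_eq (mul_comm _ _))

lemma max_rpow_helper {u v p : ℝ} (hu : 0 ≤ u) (hv : 0 ≤ v) (hp : 0 ≤ p) :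
    (u + v) ^ p ≤ 2 ^ p * (u ^ p + v ^ p) := by
  have h1 : u + v ≤ 2 * max u v := by
    rcases le_total u v with h | h
    · rw [max_eq_right h]; linarith
    · rw [max_eq_left h]; linarith
  have hm : 0 ≤ max u v := le_max_of_le_left hu
  calc (u + v) ^ p ≤ (2 * max u v) ^ p := Real.rpow_le_rpow (by linarith) h1 hp
    _ = 2 ^ p * (max u v) ^ p := Real.mul_rpow (by norm_num) hm
    _ ≤ 2 ^ p * (u ^ p + v ^ p) := by
        apply mul_le_mul_of_nonneg_left _ (Real.rpow_nonneg (by norm_num) p)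
        rcases le_total u v with h | h
        · rw [max_eq_right h]
          nlinarith [Real.rpow_nonneg hu p]
        · rw [max_eq_left h]
          nlinarith [Real.rpow_nonneg hv p]

lemma G_rpow {p t : ℝ} (ht : 0 < t) (x : ℝ) :
    G t x ^ p = (4 * π * t) ^ (-p/2) * Real.exp (-(p / (4 * t)) * x ^ 2) := by
  unfold G
  have h4 : (0:ℝ) < 4 * π * t := by positivity
  rw [Real.mul_rpow (Real.rpow_nonneg h4.le _) (Real.exp_nonneg _),
    ← Real.rpow_mul h4.le, ← Real.exp_mul]
  congr 1
  · congr 1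
    ring
  · congr 1
    field_simp

lemma integral_le_of_gauss_bound {f : ℝ → ℝ} {C₁ C₂ c₁ c₂ R : ℝ}
    (hc₁ : 0 < c₁) (hc₂ : 0 < c₂)
    (hf : ∀ x, 0 ≤ f x)
    (hb : ∀ x, f x ≤ C₁ * Real.exp (-c₁ * x ^ 2) + C₂ * Real.exp (-c₂ * x ^ 2))
    (hR : C₁ * Real.sqrt (π / c₁) + C₂ * Real.sqrt (π / c₂) ≤ R) :
    ∫ x : ℝ, f x ≤ R := by
  have hi₁ : Integrable (fun x : ℝ => Real.exp (-c₁ * x ^ 2)) := integrable_exp_neg_mul_sq hc₁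
  have hi₂ : Integrable (fun x : ℝ => Real.exp (-c₂ * x ^ 2)) := integrable_exp_neg_mul_sq hc₂
  have key : ∫ x : ℝ, f x ≤
      ∫ x : ℝ, (C₁ * Real.exp (-c₁ * x ^ 2) + C₂ * Real.exp (-c₂ * x ^ 2)) :=
    integral_mono_of_nonneg (Eventually.of_forall hf)
      ((hi₁.const_mul C₁).add (hi₂.const_mul C₂)) (Eventually.of_forall hb)
  rw [integral_add (hi₁.const_mul C₁) (hi₂.const_mul C₂), MeasureTheory.integral_const_mul,
    MeasureTheory.integral_const_mul, integral_gaussian, integral_gaussian] at key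
  exact key.trans hR

lemma sqrt_pi_div_le {c t : ℝ} (hc : 0 < c) (ht : 0 < t) (h : π / c ≤ 4 * π * t) :
    Real.sqrt (π / c) ≤ (4 * π * t) ^ ((1:ℝ)/2) := by
  rw [Real.sqrt_eq_rpow]
  exact Real.rpow_le_rpow (by positivity) h (by norm_num)

lemma rpow_combine {t p : ℝ} (ht : 0 < t) :
    (4 * π * t) ^ (-p/2) * (4 * π * t) ^ ((1:ℝ)/2) = (4 * π * t) ^ ((1 - p)/2) := by
  rw [← Real.rpow_add (by positivity)]
  congr 1
  ring

lemma branch1 {p : ℝ} (hp : 2 ≤ p) {a b : ℝ} (hb : 0 < b) (hba : b ≤ a) :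
    ∫ x : ℝ, |G a x - G b x| ^ p ≤ (2 ^ p * 2 * (4 * π) ^ ((1 - p)/2)) * b ^ ((1 - p)/2) := by
  have ha : 0 < a := hb.trans_le hba
  have hp0 : (0:ℝ) ≤ p := by linarith
  have h4a : (0:ℝ) < 4 * π * a := by positivity
  have h4b : (0:ℝ) < 4 * π * b := by positivity
  apply integral_le_of_gauss_bound (C₁ := 2 ^ p * (4 * π * a) ^ (-p/2))
    (C₂ := 2 ^ p * (4 * π * b) ^ (-p/2)) (c₁ := p/(4*a)) (c₂ := p/(4*b))
    (by positivity) (by positivity)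
  · intro x
    positivity
  · intro x
    calc |G a x - G b x| ^ p ≤ (G a x + G b x) ^ p := by
          apply Real.rpow_le_rpow (abs_nonneg _) _ hp0
          have := G_nonneg ha x
          have := G_nonneg hb x
          rw [abs_sub_le_iff]
          constructor <;> linarith
      _ ≤ 2 ^ p * (G a x ^ p + G b x ^ p) :=
          max_rpow_helper (G_nonneg ha x) (G_nonneg hb x) hp0
      _ = 2 ^ p * (4 * π * a) ^ (-p/2) * Real.exp (-(p/(4*a)) * x ^ 2)
          + 2 ^ p * (4 * π * b) ^ (-p/2) * Real.exp (-(p/(4*b)) * x ^ 2) := by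
          rw [G_rpow ha, G_rpow hb]; ring
  · have e1 : Real.sqrt (π / (p/(4*a))) ≤ (4 * π * a) ^ ((1:ℝ)/2) := by
      apply sqrt_pi_div_le (by positivity) ha
      rw [div_div_eq_mul_div]
      rw [div_le_iff₀ (by linarith)]
      nlinarith [pi_pos, ha.le]
    have e2 : Real.sqrt (π / (p/(4*b))) ≤ (4 * π * b) ^ ((1:ℝ)/2) := by
      apply sqrt_pi_div_le (by positivity) hb
      rw [div_div_eq_mul_div]
      rw [div_le_iff₀ (by linarith)]
      nlinarith [pi_pos, hb.le]
    have t1 : 2 ^ p * (4 * π * a) ^ (-p/2) * Real.sqrt (π / (p/(4*a)))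
        ≤ 2 ^ p * (4 * π) ^ ((1-p)/2) * b ^ ((1-p)/2) := by
      calc 2 ^ p * (4 * π * a) ^ (-p/2) * Real.sqrt (π / (p/(4*a)))
          ≤ 2 ^ p * (4 * π * a) ^ (-p/2) * (4 * π * a) ^ ((1:ℝ)/2) := by
            apply mul_le_mul_of_nonneg_left e1
            positivity
        _ = 2 ^ p * (4 * π * a) ^ ((1-p)/2) := by rw [mul_assoc, rpow_combine ha]
        _ ≤ 2 ^ p * (4 * π * b) ^ ((1-p)/2) := by
            apply mul_le_mul_of_nonneg_left _ (by positivity)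
            apply Real.rpow_le_rpow_of_nonpos h4b (by nlinarith [pi_pos]) (by linarith)
        _ = 2 ^ p * (4 * π) ^ ((1-p)/2) * b ^ ((1-p)/2) := by
            rw [Real.mul_rpow (by positivity) hb.le, mul_assoc]
    have t2 : 2 ^ p * (4 * π * b) ^ (-p/2) * Real.sqrt (π / (p/(4*b)))
        ≤ 2 ^ p * (4 * π) ^ ((1-p)/2) * b ^ ((1-p)/2) := by
      calc 2 ^ p * (4 * π * b) ^ (-p/2) * Real.sqrt (π / (p/(4*b)))
          ≤ 2 ^ p * (4 * π * b) ^ (-p/2) * (4 * π * b) ^ ((1:ℝ)/2) := by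
            apply mul_le_mul_of_nonneg_left e2
            positivity
        _ = 2 ^ p * (4 * π * b) ^ ((1-p)/2) := by rw [mul_assoc, rpow_combine hb]
        _ = 2 ^ p * (4 * π) ^ ((1-p)/2) * b ^ ((1-p)/2) := by
            rw [Real.mul_rpow (by positivity) hb.le, mul_assoc]
    linarith

lemma sq_rpow_le {y K p : ℝ} (hy : 0 ≤ y) (hK : 0 < K) (hp : 0 ≤ p) :
    y ^ p ≤ K ^ p * Real.exp (y / K) ^ p := by
  rw [← Real.mul_rpow hK.le (Real.exp_nonneg _)]
  apply Real.rpow_le_rpow hy _ hp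
  have h := Real.add_one_le_exp (y / K)
  have h2 := mul_le_mul_of_nonneg_left h hK.le
  have h3 : K * (y / K + 1) = y + K := by field_simp
  linarith

lemma rpow_rpow {x : ℝ} (hx : 0 ≤ x) (p : ℝ) :
    (x ^ (-(1:ℝ)/2)) ^ p = x ^ (-p/2) := by
  rw [← Real.rpow_mul hx]
  congr 1
  ring

lemma branch2 {p : ℝ} (hp : 2 ≤ p) {a b : ℝ} (hb : 0 < b) (hba : b ≤ a) (ha2 : a ≤ 2 * b) :
    ∫ x : ℝ, |G a x - G b x| ^ p ≤
      ((4 * π) ^ (-p/2) * 2 ^ p * (4 ^ p + 1) * (8 * π) ^ ((1:ℝ)/2)) *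
        ((a - b) ^ p * b ^ ((1 - 3 * p)/2)) := by
  have ha : 0 < a := hb.trans_le hba
  have hp0 : (0:ℝ) ≤ p := by linarith
  have h4b : (0:ℝ) < 4 * π * b := by positivity
  have hab : 0 ≤ a - b := by linarith
  apply integral_le_of_gauss_bound
    (C₁ := (a - b) ^ p * ((4 * π * b) ^ (-p/2) * 2 ^ p * ((8 * a) ^ p / (4 * b ^ 2) ^ p)))
    (C₂ := (a - b) ^ p * ((4 * π * b) ^ (-p/2) * 2 ^ p * (1 / (2 * b)) ^ p))
    (c₁ := p/(8*a)) (c₂ := p/(4*a)) (by positivity) (by positivity)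
  · intro x; positivity
  · -- pointwise bound
    intro x
    have hMp : (M a b x) ^ p ≤ (4 * π * b) ^ (-p/2) * 2 ^ p *
        ((8 * a) ^ p / (4 * b ^ 2) ^ p * Real.exp (-(p/(8*a)) * x ^ 2)
          + (1 / (2 * b)) ^ p * Real.exp (-(p/(4*a)) * x ^ 2)) := by
      have hS : (x ^ 2 / (4 * b ^ 2) + 1 / (2 * b)) ^ p
          ≤ 2 ^ p * ((x ^ 2) ^ p / (4 * b ^ 2) ^ p + (1 / (2 * b)) ^ p) := by
        have := max_rpow_helper (u := x ^ 2 / (4 * b ^ 2)) (v := 1 / (2 * b))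
          (by positivity) (by positivity) hp0
        rwa [Real.div_rpow (sq_nonneg x) (by positivity)] at this
      have hx2 : (x ^ 2) ^ p ≤ (8 * a) ^ p * Real.exp (x ^ 2 / (8 * a)) ^ p :=
        sq_rpow_le (sq_nonneg x) (by positivity) hp0
      have hMeq : (M a b x) ^ p = (4 * π * b) ^ (-p/2)
          * (x ^ 2 / (4 * b ^ 2) + 1 / (2 * b)) ^ p
          * Real.exp (-x ^ 2 / (4 * a)) ^ p := by
        unfold M
        rw [Real.mul_rpow (by positivity) (Real.exp_nonneg _),
          Real.mul_rpow (Real.rpow_nonneg h4b.le _) (by positivity), rpow_rpow h4b.le]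
      rw [hMeq]
      have hexp1 : Real.exp (x ^ 2 / (8 * a)) ^ p * Real.exp (-x ^ 2 / (4 * a)) ^ p
          = Real.exp (-(p/(8*a)) * x ^ 2) := by
        rw [← Real.exp_mul, ← Real.exp_mul, ← Real.exp_add]
        congr 1
        field_simp
        ring
      have hexp2 : Real.exp (-x ^ 2 / (4 * a)) ^ p = Real.exp (-(p/(4*a)) * x ^ 2) := by
        rw [← Real.exp_mul]
        congr 1
        field_simp
      calc (4 * π * b) ^ (-p/2) * (x ^ 2 / (4 * b ^ 2) + 1 / (2 * b)) ^ p
            * Real.exp (-x ^ 2 / (4 * a)) ^ p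
          ≤ (4 * π * b) ^ (-p/2) * (2 ^ p * ((x ^ 2) ^ p / (4 * b ^ 2) ^ p + (1 / (2 * b)) ^ p))
            * Real.exp (-x ^ 2 / (4 * a)) ^ p := by
            apply mul_le_mul_of_nonneg_right _ (Real.rpow_nonneg (Real.exp_nonneg _) p)
            exact mul_le_mul_of_nonneg_left hS (Real.rpow_nonneg h4b.le _)
        _ ≤ (4 * π * b) ^ (-p/2) * (2 ^ p * (((8 * a) ^ p * Real.exp (x ^ 2 / (8 * a)) ^ p)
              / (4 * b ^ 2) ^ p + (1 / (2 * b)) ^ p))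
            * Real.exp (-x ^ 2 / (4 * a)) ^ p := by
            gcongr
        _ = (4 * π * b) ^ (-p/2) * 2 ^ p *
            ((8 * a) ^ p / (4 * b ^ 2) ^ p * Real.exp (-(p/(8*a)) * x ^ 2)
              + (1 / (2 * b)) ^ p * Real.exp (-(p/(4*a)) * x ^ 2)) := by
            rw [← hexp1, ← hexp2]
            ring
    calc |G a x - G b x| ^ p ≤ ((a - b) * M a b x) ^ p :=
          Real.rpow_le_rpow (abs_nonneg _) (G_sub_le hb hba x) hp0
      _ = (a - b) ^ p * (M a b x) ^ p := Real.mul_rpow hab (M_nonneg hb x)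
      _ ≤ (a - b) ^ p * ((4 * π * b) ^ (-p/2) * 2 ^ p *
            ((8 * a) ^ p / (4 * b ^ 2) ^ p * Real.exp (-(p/(8*a)) * x ^ 2)
              + (1 / (2 * b)) ^ p * Real.exp (-(p/(4*a)) * x ^ 2))) :=
          mul_le_mul_of_nonneg_left hMp (Real.rpow_nonneg hab p)
      _ = (a - b) ^ p * ((4 * π * b) ^ (-p/2) * 2 ^ p * ((8 * a) ^ p / (4 * b ^ 2) ^ p))
            * Real.exp (-(p/(8*a)) * x ^ 2)
          + (a - b) ^ p * ((4 * π * b) ^ (-p/2) * 2 ^ p * (1 / (2 * b)) ^ p)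
            * Real.exp (-(p/(4*a)) * x ^ 2) := by ring
  · -- the constant bound
    have hbp : (0:ℝ) < b ^ ((1:ℝ)/2) := Real.rpow_pos_of_pos hb _
    have hs1 : Real.sqrt (π / (p/(8*a))) ≤ (8*π) ^ ((1:ℝ)/2) * b ^ ((1:ℝ)/2) := by
      have h := sqrt_pi_div_le (c := p/(8*a)) (t := 2*b) (by positivity) (by positivity) (by
        rw [div_div_eq_mul_div, div_le_iff₀ (by linarith)]
        nlinarith [pi_pos])
      calc Real.sqrt (π / (p/(8*a))) ≤ (4*π*(2*b)) ^ ((1:ℝ)/2) := h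
        _ = (8*π) ^ ((1:ℝ)/2) * b ^ ((1:ℝ)/2) := by
          rw [show 4*π*(2*b) = (8*π)*b by ring, Real.mul_rpow (by positivity) hb.le]
    have hs2 : Real.sqrt (π / (p/(4*a))) ≤ (8*π) ^ ((1:ℝ)/2) * b ^ ((1:ℝ)/2) := by
      have h := sqrt_pi_div_le (c := p/(4*a)) (t := 2*b) (by positivity) (by positivity) (by
        rw [div_div_eq_mul_div, div_le_iff₀ (by linarith)]
        nlinarith [pi_pos])
      calc Real.sqrt (π / (p/(4*a))) ≤ (4*π*(2*b)) ^ ((1:ℝ)/2) := h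
        _ = (8*π) ^ ((1:ℝ)/2) * b ^ ((1:ℝ)/2) := by
          rw [show 4*π*(2*b) = (8*π)*b by ring, Real.mul_rpow (by positivity) hb.le]
    have hc1 : (8*a) ^ p / (4*b^2) ^ p ≤ 4 ^ p * b ^ (-p) := by
      rw [← Real.div_rpow (by positivity) (by positivity)]
      have h1 : (8*a)/(4*b^2) ≤ 4/b := by
        rw [div_le_div_iff₀ (by positivity) hb]
        nlinarith
      calc ((8*a)/(4*b^2)) ^ p ≤ (4/b) ^ p := Real.rpow_le_rpow (by positivity) h1 hp0
        _ = 4 ^ p * b ^ (-p) := by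
          rw [Real.div_rpow (by norm_num) hb.le, Real.rpow_neg hb.le, div_eq_mul_inv]
    have hc2 : (1/(2*b)) ^ p ≤ 1 * b ^ (-p) := by
      have h1 : 1/(2*b) ≤ 1/b := by
        rw [div_le_div_iff₀ (by positivity) hb]
        nlinarith
      calc (1/(2*b)) ^ p ≤ (1/b) ^ p := Real.rpow_le_rpow (by positivity) h1 hp0
        _ = 1 * b ^ (-p) := by
          rw [Real.div_rpow (by norm_num) hb.le, Real.rpow_neg hb.le, Real.one_rpow,
            div_eq_mul_inv]
    have h4πb : (4*π*b) ^ (-p/2) = (4*π) ^ (-p/2) * b ^ (-p/2) := by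
      rw [show 4*π*b = (4*π)*b by ring, Real.mul_rpow (by positivity) hb.le]
    have hcomb : b ^ (-p/2) * b ^ (-p) * b ^ ((1:ℝ)/2) = b ^ ((1-3*p)/2) := by
      rw [← Real.rpow_add hb, ← Real.rpow_add hb]
      congr 1
      ring
    rw [h4πb]
    calc (a - b) ^ p * ((4*π) ^ (-p/2) * b ^ (-p/2) * 2 ^ p * ((8*a) ^ p / (4*b^2) ^ p))
          * Real.sqrt (π / (p/(8*a)))
        + (a - b) ^ p * ((4*π) ^ (-p/2) * b ^ (-p/2) * 2 ^ p * (1/(2*b)) ^ p)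
          * Real.sqrt (π / (p/(4*a)))
        ≤ (a - b) ^ p * ((4*π) ^ (-p/2) * b ^ (-p/2) * 2 ^ p * (4 ^ p * b ^ (-p)))
          * ((8*π) ^ ((1:ℝ)/2) * b ^ ((1:ℝ)/2))
        + (a - b) ^ p * ((4*π) ^ (-p/2) * b ^ (-p/2) * 2 ^ p * (1 * b ^ (-p)))
          * ((8*π) ^ ((1:ℝ)/2) * b ^ ((1:ℝ)/2)) := by
          gcongr <;> first
            | positivity
            | exact Real.sqrt_nonneg _
            | exact hc1
            | exact hc2
            | exact hs1
            | exact hs2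
      _ = ((4*π) ^ (-p/2) * 2 ^ p * (4 ^ p + 1) * (8*π) ^ ((1:ℝ)/2)) *
            ((a - b) ^ p * (b ^ (-p/2) * b ^ (-p) * b ^ ((1:ℝ)/2))) := by ring
      _ = ((4*π) ^ (-p/2) * 2 ^ p * (4 ^ p + 1) * (8*π) ^ ((1:ℝ)/2)) *
            ((a - b) ^ p * b ^ ((1-3*p)/2)) := by rw [hcomb]

theorem heat_kernel_time_increment_L2q1
    (q₁ : ℝ) (hq : 1 ≤ q₁) :
    ∃ C : ℝ, 0 < C ∧ ∀ t₁ t₂ : ℝ, 0 < t₁ → t₁ < t₂ →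
      ∫ s in (0:ℝ)..t₁,
          (∫ x : ℝ, |G (t₂ - s) x - G (t₁ - s) x| ^ (2 * q₁)) ^ (1/q₁)
        ≤ C * (t₂ - t₁) ^ (1/(2*q₁)) := by
  have hq0 : 0 < q₁ := lt_of_lt_of_le one_pos hq
  have hp : (2:ℝ) ≤ 2 * q₁ := by linarith
  set K₁ : ℝ := 2 ^ (2*q₁) * 2 * (4*π) ^ ((1 - 2*q₁)/2) with hK₁def
  set K₂ : ℝ := (4*π) ^ (-(2*q₁)/2) * 2 ^ (2*q₁) * (4 ^ (2*q₁) + 1) * (8*π) ^ ((1:ℝ)/2)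
    with hK₂def
  have hπ : (0:ℝ) < 4*π := by positivity
  have h8π : (0:ℝ) < 8*π := by positivity
  have hK₁ : 0 < K₁ := by
    rw [hK₁def]; positivity
  have hK₂ : 0 < K₂ := by
    rw [hK₂def]; positivity
  set α : ℝ := 1/(2*q₁) - 1 with hαdef
  have hα1 : α + 1 = 1/(2*q₁) := by rw [hαdef]; ring
  have hα1pos : 0 < α + 1 := by rw [hα1]; positivity
  have hα : -1 < α := by linarith
  have hαneg : α ≤ -1/2 := by
    rw [hαdef]
    have h1 : 1/(2*q₁) ≤ 1/2 := by
      apply div_le_div_of_nonneg_left (by norm_num) (by norm_num) (by linarith)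
    linarith
  clear_value α
  set K₁' : ℝ := K₁ ^ (1/q₁) with hK₁'def
  set K₂' : ℝ := K₂ ^ (1/q₁) with hK₂'def
  have hK₁' : 0 < K₁' := Real.rpow_pos_of_pos hK₁ _
  have hK₂' : 0 < K₂' := Real.rpow_pos_of_pos hK₂ _
  refine ⟨2*q₁*K₁' + K₂', by positivity, ?_⟩
  intro t₁ t₂ ht₁ ht
  set δ : ℝ := t₂ - t₁ with hδdef
  have hδ : 0 < δ := by rw [hδdef]; linarith
  set F : ℝ → ℝ :=
    fun s => (∫ x : ℝ, |G (t₂ - s) x - G (t₁ - s) x| ^ (2 * q₁)) ^ (1/q₁) with hFdef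
  have hFnn : ∀ s, 0 ≤ F s := fun s =>
    Real.rpow_nonneg (integral_nonneg fun x => Real.rpow_nonneg (abs_nonneg _) _) _
  -- pointwise bound 1
  have key1 : ∀ s, s < t₁ → F s ≤ K₁' * (t₁ - s) ^ α := by
    intro s hst
    have hb : 0 < t₁ - s := by linarith
    have hba : t₁ - s ≤ t₂ - s := by linarith
    have h := branch1 hp hb hba
    have hInn : 0 ≤ ∫ x : ℝ, |G (t₂ - s) x - G (t₁ - s) x| ^ (2 * q₁) :=
      integral_nonneg fun x => Real.rpow_nonneg (abs_nonneg _) _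
    have h2 := Real.rpow_le_rpow hInn h (by positivity : (0:ℝ) ≤ 1/q₁)
    calc F s ≤ (K₁ * (t₁ - s) ^ ((1 - 2*q₁)/2)) ^ (1/q₁) := h2
      _ = K₁' * ((t₁ - s) ^ ((1 - 2*q₁)/2)) ^ (1/q₁) :=
          Real.mul_rpow hK₁.le (Real.rpow_nonneg hb.le _)
      _ = K₁' * (t₁ - s) ^ α := by
          rw [← Real.rpow_mul hb.le]
          congr 1
          rw [hαdef]
          field_simp
  -- pointwise bound 2
  have key2 : ∀ s, s ≤ t₁ - δ → F s ≤ K₂' * δ ^ (2:ℝ) * (t₁ - s) ^ (α - 2) := by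
    intro s hsδ
    have hb : 0 < t₁ - s := by linarith
    have hba : t₁ - s ≤ t₂ - s := by linarith
    have h2b : t₂ - s ≤ 2 * (t₁ - s) := by
      have h' : δ ≤ t₁ - s := by linarith
      rw [hδdef] at h'
      linarith
    have h := branch2 hp hb hba h2b
    have hab : t₂ - s - (t₁ - s) = δ := by rw [hδdef]; ring
    rw [hab] at h
    have hInn : 0 ≤ ∫ x : ℝ, |G (t₂ - s) x - G (t₁ - s) x| ^ (2 * q₁) :=
      integral_nonneg fun x => Real.rpow_nonneg (abs_nonneg _) _
    have h2 := Real.rpow_le_rpow hInn h (by positivity : (0:ℝ) ≤ 1/q₁)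
    calc F s ≤ (K₂ * (δ ^ (2*q₁) * (t₁ - s) ^ ((1 - 3*(2*q₁))/2))) ^ (1/q₁) := h2
      _ = K₂' * ((δ ^ (2*q₁) * (t₁ - s) ^ ((1 - 3*(2*q₁))/2)) ^ (1/q₁)) :=
          Real.mul_rpow hK₂.le
            (mul_nonneg (Real.rpow_nonneg hδ.le _) (Real.rpow_nonneg hb.le _))
      _ = K₂' * ((δ ^ (2*q₁)) ^ (1/q₁) * ((t₁ - s) ^ ((1 - 3*(2*q₁))/2)) ^ (1/q₁)) := by
          rw [Real.mul_rpow (Real.rpow_nonneg hδ.le _) (Real.rpow_nonneg hb.le _)]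
      _ = K₂' * δ ^ (2:ℝ) * (t₁ - s) ^ (α - 2) := by
          rw [← Real.rpow_mul hδ.le, ← Real.rpow_mul hb.le]
          rw [show 2*q₁*(1/q₁) = 2 by field_simp]
          rw [show (1 - 3*(2*q₁))/2 * (1/q₁) = α - 2 by rw [hαdef]; field_simp; ring]
          ring
  -- majorant 1 : interval integrability and value
  have hmaj1 : ∀ u v : ℝ, IntervalIntegrable (fun s => K₁' * (t₁ - s) ^ α) volume u v := by
    intro u v
    apply IntervalIntegrable.const_mul
    have h := (intervalIntegral.intervalIntegrable_rpow' hα (a := t₁ - u) (b := t₁ - v)).comp_sub_left t₁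
    simpa using h
  have hval1 : ∀ u : ℝ, u ≤ t₁ →
      ∫ s in u..t₁, K₁' * (t₁ - s) ^ α = K₁' * ((t₁ - u) ^ (α+1) / (α+1)) := by
    intro u hu
    rw [intervalIntegral.integral_const_mul]
    congr 1
    rw [integral_comp_sub_left (fun x => x ^ α) t₁, sub_self,
      integral_rpow (Or.inl hα),
      Real.zero_rpow (by linarith : α + 1 ≠ 0)]
    ring
  have hne : ∀ᵐ s : ℝ, s ≠ t₁ := by
    rw [ae_iff]
    simp only [ne_eq, not_not, Set.setOf_eq_eq_singleton]
    exact measure_singleton t₁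
  rw [integral_of_le ht₁.le]
  rcases le_or_gt t₁ δ with hcase | hcase
  · -- t₁ ≤ δ : single bound suffices
    have hle : ∫ s in Set.Ioc 0 t₁, F s ≤ ∫ s in Set.Ioc 0 t₁, K₁' * (t₁ - s) ^ α := by
      apply integral_mono_of_nonneg (Eventually.of_forall hFnn) ((hmaj1 0 t₁).1)
      filter_upwards [ae_restrict_mem measurableSet_Ioc, ae_restrict_of_ae hne] with s hs hsne
      exact key1 s (lt_of_le_of_ne hs.2 hsne)
    have hv := hval1 0 ht₁.le
    rw [integral_of_le ht₁.le] at hv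
    have hrp : (t₁ - 0) ^ (α+1) ≤ δ ^ (α+1) :=
      Real.rpow_le_rpow (by linarith) (by linarith) hα1pos.le
    calc ∫ s in Set.Ioc 0 t₁, F s ≤ ∫ s in Set.Ioc 0 t₁, K₁' * (t₁ - s) ^ α := hle
      _ = K₁' * ((t₁ - 0) ^ (α+1) / (α+1)) := hv
      _ ≤ K₁' * (δ ^ (α+1) / (α+1)) := by gcongr
      _ = K₁' * (2*q₁) * δ ^ (α+1) := by
          rw [hα1, div_div_eq_mul_div, div_one]
          ring
      _ ≤ (2*q₁*K₁' + K₂') * δ ^ (1/(2*q₁)) := by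
          rw [← hα1]
          nlinarith [mul_nonneg hK₂'.le (Real.rpow_nonneg hδ.le (α+1))]
  · -- δ < t₁ : split the integral at t₁ - δ
    set m := t₁ - δ with hmdef
    have hm0 : 0 < m := by rw [hmdef]; linarith
    have hmt : m < t₁ := by rw [hmdef]; linarith
    have htm : t₁ - m = δ := by rw [hmdef]; ring
    have hsplit : ∫ s in Set.Ioc 0 t₁, F s ≤
        (∫ s in Set.Ioc 0 m, F s) + ∫ s in Set.Ioc m t₁, F s := by
      by_cases hInt : IntegrableOn F (Set.Ioc 0 t₁) volume
      · have hu : Set.Ioc 0 m ∪ Set.Ioc m t₁ = Set.Ioc 0 t₁ :=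
          Set.Ioc_union_Ioc_eq_Ioc hm0.le hmt.le
        rw [← hu, setIntegral_union (Set.Ioc_disjoint_Ioc_of_le le_rfl) measurableSet_Ioc
          (hInt.mono_set (hu ▸ Set.subset_union_left))
          (hInt.mono_set (hu ▸ Set.subset_union_right))]
      · rw [integral_undef hInt]
        have h1 : 0 ≤ ∫ s in Set.Ioc 0 m, F s :=
          setIntegral_nonneg measurableSet_Ioc fun s _ => hFnn s
        have h2 : 0 ≤ ∫ s in Set.Ioc m t₁, F s :=
          setIntegral_nonneg measurableSet_Ioc fun s _ => hFnn s
        linarith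
    have hpiece2 : ∫ s in Set.Ioc m t₁, F s ≤ K₁' * (2*q₁) * δ ^ (α+1) := by
      have hle : ∫ s in Set.Ioc m t₁, F s ≤ ∫ s in Set.Ioc m t₁, K₁' * (t₁ - s) ^ α := by
        apply integral_mono_of_nonneg (Eventually.of_forall hFnn) ((hmaj1 m t₁).1)
        filter_upwards [ae_restrict_mem measurableSet_Ioc, ae_restrict_of_ae hne] with s hs hsne
        exact key1 s (lt_of_le_of_ne hs.2 hsne)
      have hv := hval1 m hmt.le
      rw [integral_of_le hmt.le] at hv
      calc ∫ s in Set.Ioc m t₁, F s ≤ ∫ s in Set.Ioc m t₁, K₁' * (t₁ - s) ^ α := hle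
        _ = K₁' * ((t₁ - m) ^ (α+1) / (α+1)) := hv
        _ = K₁' * (2*q₁) * δ ^ (α+1) := by
            rw [htm, hα1, div_div_eq_mul_div, div_one]
            ring
    have hmaj2 : IntegrableOn (fun s => K₂' * δ ^ (2:ℝ) * (t₁ - s) ^ (α - 2))
        (Set.Ioc 0 m) volume := by
      have h0 : (0:ℝ) ∉ Set.uIcc δ t₁ := Set.notMem_uIcc_of_lt hδ ht₁
      have h := ((intervalIntegral.intervalIntegrable_rpow (r := α - 2) (μ := volume) (a := δ) (b := t₁)
        (Or.inr h0)).comp_sub_left t₁)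
      have h2 := (h.symm.const_mul (K₂' * δ ^ (2:ℝ)))
      rw [sub_self, ← hmdef] at h2
      exact h2.1
    have hval2 : ∫ s in (0:ℝ)..m, (t₁ - s) ^ (α-2)
        = (t₁ ^ (α-1) - δ ^ (α-1)) / (α-1) := by
      rw [integral_comp_sub_left (fun x => x ^ (α-2)) t₁, htm, sub_zero,
        integral_rpow
          (Or.inr ⟨by intro hh; linarith, Set.notMem_uIcc_of_lt hδ ht₁⟩)]
      rw [show α - 2 + 1 = α - 1 by ring]
    have hpiece1 : ∫ s in Set.Ioc 0 m, F s ≤ K₂' * δ ^ (α+1) := by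
      have hle : ∫ s in Set.Ioc 0 m, F s
          ≤ ∫ s in Set.Ioc 0 m, K₂' * δ ^ (2:ℝ) * (t₁ - s) ^ (α-2) := by
        apply integral_mono_of_nonneg (Eventually.of_forall hFnn) hmaj2
        filter_upwards [ae_restrict_mem measurableSet_Ioc] with s hs
        exact key2 s hs.2
      calc ∫ s in Set.Ioc 0 m, F s
          ≤ ∫ s in Set.Ioc 0 m, K₂' * δ ^ (2:ℝ) * (t₁ - s) ^ (α-2) := hle
        _ = K₂' * δ ^ (2:ℝ) * ((t₁ ^ (α-1) - δ ^ (α-1)) / (α-1)) := by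
            rw [← integral_of_le hm0.le,
              intervalIntegral.integral_const_mul, hval2]
        _ ≤ K₂' * δ ^ (2:ℝ) * δ ^ (α-1) := by
            apply mul_le_mul_of_nonneg_left _ (by positivity)
            have hneg : α - 1 < 0 := by linarith
            have ht₁δ : t₁ ^ (α-1) ≤ δ ^ (α-1) :=
              Real.rpow_le_rpow_of_nonpos hδ hcase.le hneg.le
            have h1 : (t₁ ^ (α-1) - δ ^ (α-1)) / (α-1)
                = (δ ^ (α-1) - t₁ ^ (α-1)) / (1-α) := by
              rw [div_eq_div_iff (by linarith) (by linarith)]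
              ring
            rw [h1]
            have h2 : δ ^ (α-1) - t₁ ^ (α-1) ≤ δ ^ (α-1) := by
              have := Real.rpow_pos_of_pos ht₁ (α-1)
              linarith
            have h3 : (1:ℝ) ≤ 1 - α := by linarith
            calc (δ ^ (α-1) - t₁ ^ (α-1)) / (1-α) ≤ (δ ^ (α-1)) / (1-α) := by gcongr
              _ ≤ δ ^ (α-1) := div_le_self (Real.rpow_nonneg hδ.le _) h3
        _ = K₂' * δ ^ (α+1) := by
            rw [mul_assoc, ← Real.rpow_add hδ, show (2:ℝ) + (α-1) = α+1 by ring]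
    calc ∫ s in Set.Ioc 0 t₁, F s
        ≤ (∫ s in Set.Ioc 0 m, F s) + ∫ s in Set.Ioc m t₁, F s := hsplit
      _ ≤ K₂' * δ ^ (α+1) + K₁' * (2*q₁) * δ ^ (α+1) := add_le_add hpiece1 hpiece2
      _ = (2*q₁*K₁' + K₂') * δ ^ (α+1) := by ring
      _ = (2*q₁*K₁' + K₂') * δ ^ (1/(2*q₁)) := by rw [hα1]
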